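/- Let $\tfrac13<\gamma\le\tfrac12$, $\eta\ge 0$, $\epsilon>0$ with $\eta+\epsilon<\gamma$, and $i\in\{0,1,2\}$. There exists a constant $\tilde M<\infty$, depending only on $\gamma,\eta,\epsilon,i$, with the following property: for every $s<t$ and every nonnegative superadditive function $W$ on the subintervals of $[s,t]$, with dyadic points $\tau^n_m := s+\tfrac{n}{2^m}(t-s)$, one has $\sum_{m\ge1}\sum_{0\le n<2^m}\Big(1-\tfrac{2n}{2^{m+1}}\Big)^{\gamma(i-2)-\eta}\Big(\tfrac{1}{2^{m+1}}\Big)^{2\gamma+\eta+\epsilon}\,W(\tau^{2n+1}_{m+1},\tau^{2n+2}_{m+1})^{\gamma-\eta-\epsilon} \le \tilde M\, W(s,t)^{\gamma-\eta-\epsilon}$. -/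

import Mathlib

open scoped ENNReal

open Finset



/-- Sum `∑_{j=1}^N j^{q'} ≤ N^{1+q'}/(1+q')` for `-1 < q' ≤ 0`. -/
lemma aux_sum_rpow' {q' : ℝ} (h1 : -1 < q') (h2 : q' ≤ 0) :
    ∀ N : ℕ, ∑ j ∈ Finset.range N, ((j : ℝ) + 1) ^ q' ≤ (N : ℝ) ^ (1 + q') / (1 + q') := by
  have hs : (0:ℝ) < 1 + q' := by linarith
  intro N
  induction N with
  | zero => simp [Real.zero_rpow (by linarith : (1:ℝ) + q' ≠ 0)]
  | succ N ih =>
    rw [Finset.sum_range_succ]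
    have hN1 : (0:ℝ) < (N:ℝ) + 1 := by positivity
    have hgm := Real.geom_mean_le_arith_mean2_weighted hs.le (by linarith : (0:ℝ) ≤ 1 - (1+q'))
      (by positivity : (0:ℝ) ≤ (N:ℝ)/((N:ℝ)+1)) zero_le_one (by ring)
    rw [Real.one_rpow, mul_one] at hgm
    have hdiv : ((N:ℝ)/((N:ℝ)+1)) ^ (1+q') = (N:ℝ)^(1+q') / ((N:ℝ)+1)^(1+q') :=
      Real.div_rpow (Nat.cast_nonneg N) hN1.le _
    have h3 : (0:ℝ) < ((N:ℝ)+1)^(1+q') := Real.rpow_pos_of_pos hN1 _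
    have h4 : ((N:ℝ)+1)^(1+q') = ((N:ℝ)+1)^q' * ((N:ℝ)+1) := by
      rw [show (1+q') = q' + 1 by ring, Real.rpow_add hN1, Real.rpow_one]
    have key : (N:ℝ)^(1+q') + (1+q') * ((N:ℝ)+1)^q' ≤ ((N:ℝ)+1)^(1+q') := by
      rw [hdiv, div_le_iff₀ h3] at hgm
      have hrhs : ((1+q')*((N:ℝ)/((N:ℝ)+1)) + (1-(1+q'))) * ((N:ℝ)+1)^(1+q')
          = ((N:ℝ)+1)^(1+q') - (1+q') * ((N:ℝ)+1)^q' := by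
        rw [h4]; field_simp; ring
      linarith [hgm, hrhs]
    have goal2 : (N:ℝ)^(1+q')/(1+q') + ((N:ℝ)+1)^q' ≤ (((N:ℝ)+1))^(1+q')/(1+q') := by
      rw [div_add' _ _ _ hs.ne', div_le_div_iff₀ hs hs]
      nlinarith [key]
    push_cast
    linarith [ih, goal2]

lemma aux_sum_rpow {q q' : ℝ} (hq : q ≤ q') (h1 : -1 < q') (h2 : q' ≤ 0) (N : ℕ) :
    ∑ j ∈ Finset.range N, ((j : ℝ) + 1) ^ q ≤ (N : ℝ) ^ (1 + q') / (1 + q') := by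
  refine le_trans (Finset.sum_le_sum fun j _ => ?_) (aux_sum_rpow' h1 h2 N)
  exact Real.rpow_le_rpow_of_exponent_le (by linarith [Nat.cast_nonneg (α := ℝ) j]) hq


lemma aux_partition {s t : ℝ} (hst : s < t) (W : ℝ → ℝ → ℝ)
    (hW0 : ∀ u v, s ≤ u → u ≤ v → v ≤ t → 0 ≤ W u v)
    (hWs : ∀ u v r, s ≤ u → u ≤ v → v ≤ r → r ≤ t → W u v + W v r ≤ W u r)
    (d : ℝ) (hd : 0 < d) :
    ∀ K : ℕ, (2*K : ℝ) ≤ d →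
      ∑ k ∈ Finset.range K, W (s + (2*(k:ℝ)+1)/d*(t-s)) (s + (2*(k:ℝ)+2)/d*(t-s))
        ≤ W s (s + (2*(K:ℝ))/d*(t-s)) := by
  have hts : (0:ℝ) < t - s := by linarith
  set v : ℝ → ℝ := fun x => s + x/d*(t-s) with hv
  have hmono : ∀ {x y : ℝ}, x ≤ y → v x ≤ v y := by
    intro x y hxy
    simp only [hv]
    have : x/d ≤ y/d := by gcongr
    nlinarith
  have hvs : ∀ x : ℝ, 0 ≤ x → s ≤ v x := by
    intro x hx
    have h0 : (0:ℝ) ≤ x/d := div_nonneg hx hd.le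
    simp only [hv]; nlinarith [mul_nonneg h0 hts.le]
  have hvt : ∀ x : ℝ, x ≤ d → v x ≤ t := by
    intro x hx
    have : x/d ≤ 1 := by rw [div_le_one hd]; exact hx
    simp only [hv]; nlinarith [this]
  intro K
  induction K with
  | zero =>
    intro _
    simp only [Nat.cast_zero, Finset.sum_range_zero, mul_zero]
    have h0 : s + 0/d*(t-s) = s := by simp
    rw [h0]
    exact hW0 s s le_rfl le_rfl hst.le
  | succ K ih =>
    intro hK
    push_cast at hK
    have hK' : (2*K : ℝ) ≤ d := by linarith
    have h2K1 : (2*(K:ℝ)+1) ≤ d := by linarith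
    have h2K2 : (2*(K:ℝ)+2) ≤ d := by linarith
    rw [Finset.sum_range_succ]
    have hs1 : s ≤ v (2*(K:ℝ)) := hvs _ (by positivity)
    have hs2 : s ≤ v (2*(K:ℝ)+1) := hvs _ (by positivity)
    have hm1 : v (2*(K:ℝ)) ≤ v (2*(K:ℝ)+1) := hmono (by linarith)
    have hm2 : v (2*(K:ℝ)+1) ≤ v (2*(K:ℝ)+2) := hmono (by linarith)
    have ht1 : v (2*(K:ℝ)+1) ≤ t := hvt _ h2K1
    have ht2 : v (2*(K:ℝ)+2) ≤ t := hvt _ h2K2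
    have h₁ := hWs s (v (2*(K:ℝ)+1)) (v (2*(K:ℝ)+2)) le_rfl hs2 hm2 ht2
    have h₂ := hWs s (v (2*(K:ℝ))) (v (2*(K:ℝ)+1)) le_rfl hs1 hm1 ht1
    have h₃ := hW0 (v (2*(K:ℝ))) (v (2*(K:ℝ)+1)) hs1 hm1 ht1
    have ihh := ih hK'
    have hcast : (2*((K:ℕ):ℝ)+2) = 2*(((K+1:ℕ)):ℝ) := by push_cast; ring
    calc ∑ k ∈ Finset.range K, W (s + (2*(k:ℝ)+1)/d*(t-s)) (s + (2*(k:ℝ)+2)/d*(t-s))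
          + W (s + (2*(K:ℝ)+1)/d*(t-s)) (s + (2*(K:ℝ)+2)/d*(t-s))
        ≤ W s (v (2*(K:ℝ))) + W (v (2*(K:ℝ)+1)) (v (2*(K:ℝ)+2)) := by
          exact add_le_add ihh le_rfl
      _ ≤ W s (v (2*((K+1:ℕ):ℝ))) := by
          rw [← hcast]; simp only [hv] at h₁ h₂ h₃ ⊢; linarith


lemma aux_ord {s t : ℝ} (hst : s < t) (m k : ℕ) (hk : k < 2^(m+1)) :
    0 < 1 - 2*(k:ℝ)/2^(m+2) ∧ s ≤ s + (2*(k:ℝ)+1)/2^(m+2)*(t-s) ∧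
      s + (2*(k:ℝ)+1)/2^(m+2)*(t-s) ≤ s + (2*(k:ℝ)+2)/2^(m+2)*(t-s) ∧
      s + (2*(k:ℝ)+2)/2^(m+2)*(t-s) ≤ t := by
  have hts : (0:ℝ) < t - s := by linarith
  have hd : (0:ℝ) < 2^(m+2) := by positivity
  have hkR : (2*(k:ℝ)+2) ≤ 2^(m+2) := by
    have : (k:ℝ) + 1 ≤ 2^(m+1) := by exact_mod_cast Nat.succ_le_of_lt hk
    have h2 : (2:ℝ)^(m+2) = 2 * 2^(m+1) := by ring
    nlinarith
  refine ⟨?_, ?_, ?_, ?_⟩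
  · have : 2*(k:ℝ)/2^(m+2) < 1 := by
      rw [div_lt_one hd]; nlinarith
    linarith
  · have h0 : (0:ℝ) ≤ (2*(k:ℝ)+1)/2^(m+2) := by positivity
    nlinarith [mul_nonneg h0 hts.le]
  · have : (2*(k:ℝ)+1)/2^(m+2) ≤ (2*(k:ℝ)+2)/2^(m+2) := by gcongr; linarith
    nlinarith
  · have : (2*(k:ℝ)+2)/2^(m+2) ≤ 1 := by rw [div_le_one hd]; exact hkR
    nlinarith

lemma aux_perm (θ a b q q' : ℝ) (hθ0 : 0 < θ) (h1θ : 0 < 1 - θ)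
    (hqdef : q = a * (1-θ)⁻¹) (ha : a ≤ 0)
    (hq'1 : -1 < q') (hq'0 : q' ≤ 0) (hqq' : q ≤ q') (hb : 0 < b)
    (s t : ℝ) (hst : s < t) (W : ℝ → ℝ → ℝ)
    (hW0 : ∀ u v, s ≤ u → u ≤ v → v ≤ t → 0 ≤ W u v)
    (hWs : ∀ u v r, s ≤ u → u ≤ v → v ≤ r → r ≤ t → W u v + W v r ≤ W u r)
    (m : ℕ) :
    ∑ k ∈ Finset.range (2^(m+1)),
        (1 - 2*(k:ℝ)/2^(m+2)) ^ a * ((1:ℝ)/2^(m+2)) ^ b *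
          W (s + (2*(k:ℝ)+1)/2^(m+2)*(t-s)) (s + (2*(k:ℝ)+2)/2^(m+2)*(t-s)) ^ θ
      ≤ ((1+q')^(1-θ))⁻¹ *
          (2:ℝ)^(((m:ℝ)+1)*((1+q')*(1-θ)) - ((m:ℝ)+1)*a - ((m:ℝ)+2)*b) * W s t ^ θ := by
  have hts : (0:ℝ) < t - s := by linarith
  have two_pos : (0:ℝ) < 2 := by norm_num
  set N : ℕ := 2^(m+1) with hN
  have hNR : (N:ℝ) = 2^(m+1) := by rw [hN]; push_cast; norm_num
  have hNRpos : (0:ℝ) < (N:ℝ) := by rw [hNR]; positivity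
  have hd : (0:ℝ) < 2^(m+2) := by positivity
  have hdN : (2:ℝ)^(m+2) = 2*(N:ℝ) := by rw [hNR]; ring
  set B : ℝ := ((1:ℝ)/2^(m+2))^b with hB
  have hBpos : 0 < B := Real.rpow_pos_of_pos (by positivity) b
  set Wk : ℕ → ℝ := fun k =>
    W (s + (2*(k:ℝ)+1)/2^(m+2)*(t-s)) (s + (2*(k:ℝ)+2)/2^(m+2)*(t-s)) with hWkdef
  set e : ℕ → ℝ := fun k => 1 - 2*(k:ℝ)/2^(m+2) with he
  have hord : ∀ k ∈ Finset.range N, 0 < e k ∧ 0 ≤ Wk k := by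
    intro k hk
    obtain ⟨h1, h2, h3, h4⟩ := aux_ord hst m k (Finset.mem_range.mp hk)
    exact ⟨h1, hW0 _ _ h2 h3 h4⟩
  have hθ1 : θ < 1 := by linarith
  have e1 : (1-θ)⁻¹ * (1-θ) = 1 := inv_mul_cancel₀ h1θ.ne'
  have hqa : q * (1-θ) = a := by rw [hqdef, mul_assoc, e1, mul_one]
  have hq0 : q ≤ 0 := by
    rw [hqdef]; exact mul_nonpos_of_nonpos_of_nonneg ha (by positivity)
  -- Hölder
  have hpq : ((1-θ)⁻¹).HolderConjugate θ⁻¹ := by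
    constructor
    · rw [inv_inv, inv_inv, inv_one]; ring
    · exact inv_pos.mpr h1θ
    · exact inv_pos.mpr hθ0
  have holder := Real.inner_le_Lp_mul_Lq_of_nonneg (Finset.range N)
    (f := fun k => e k ^ a * B) (g := fun k => Wk k ^ θ) hpq
    (fun k hk => mul_nonneg (Real.rpow_nonneg (hord k hk).1.le a) hBpos.le)
    (fun k hk => Real.rpow_nonneg (hord k hk).2 θ)
  rw [one_div, one_div, inv_inv, inv_inv] at holder
  have hg : ∑ k ∈ Finset.range N, ((Wk k ^ θ) ^ θ⁻¹) = ∑ k ∈ Finset.range N, Wk k :=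
    Finset.sum_congr rfl fun k hk => by
      rw [← Real.rpow_mul (hord k hk).2, mul_inv_cancel₀ hθ0.ne', Real.rpow_one]
  rw [hg] at holder
  -- partition bound
  have hpart : ∑ k ∈ Finset.range N, Wk k ≤ W s t := by
    have h2N : (2*(N:ℕ):ℝ) ≤ (2:ℝ)^(m+2) := le_of_eq (by rw [hdN])
    have hP := aux_partition hst W hW0 hWs ((2:ℝ)^(m+2)) hd N h2N
    have hvt : s + 2*((N:ℕ):ℝ)/(2:ℝ)^(m+2)*(t-s) = t := by
      rw [hdN]; field_simp; ring
    rw [hvt] at hP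
    exact hP
  -- bound on the Lp sum of weights
  have hNk : ∀ k ∈ Finset.range N, (0:ℝ) ≤ (N:ℝ) - k := by
    intro k hk
    have h := (Finset.mem_range.mp hk).le
    have : (k:ℝ) ≤ (N:ℝ) := by exact_mod_cast h
    linarith
  have hTk : ∀ k ∈ Finset.range N,
      (e k ^ a * B) ^ (1-θ)⁻¹ = ((N:ℝ) - k)^q / (N:ℝ)^q * B^(1-θ)⁻¹ := by
    intro k hk
    have hek : e k = ((N:ℝ) - k)/(N:ℝ) := by
      simp only [he, hdN]
      field_simp
    rw [Real.mul_rpow (Real.rpow_nonneg (hord k hk).1.le a) hBpos.le,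
        ← Real.rpow_mul (hord k hk).1.le, ← hqdef, hek,
        Real.div_rpow (hNk k hk) hNRpos.le]
  have hT : ∑ k ∈ Finset.range N, (e k ^ a * B) ^ (1-θ)⁻¹
      = (∑ k ∈ Finset.range N, ((N:ℝ) - k)^q) / (N:ℝ)^q * B^(1-θ)⁻¹ := by
    rw [Finset.sum_congr rfl hTk, ← Finset.sum_mul, ← Finset.sum_div]
  have hreflect : ∑ k ∈ Finset.range N, ((N:ℝ) - k)^q
      = ∑ j ∈ Finset.range N, ((j:ℝ)+1)^q := by
    rw [← Finset.sum_range_reflect (fun j => ((j:ℝ)+1)^q) N]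
    refine Finset.sum_congr rfl fun j hj => ?_
    have hjN : j + 1 ≤ N := Finset.mem_range.mp hj
    have hc : ((N - 1 - j : ℕ) : ℝ) = (N:ℝ) - j - 1 := by
      have h1 : (N - 1 - j : ℕ) = N - (j+1) := by omega
      rw [h1, Nat.cast_sub hjN]; push_cast; ring
    simp only [hc]
    norm_num
  have h1q' : (0:ℝ) < 1 + q' := by linarith
  have hNq : (0:ℝ) < (N:ℝ)^q := Real.rpow_pos_of_pos hNRpos q
  have hTle : ∑ k ∈ Finset.range N, (e k ^ a * B)^(1-θ)⁻¹
      ≤ (N:ℝ)^(1+q') * (1+q')⁻¹ * ((N:ℝ)^q)⁻¹ * B^(1-θ)⁻¹ := by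
    rw [hT, hreflect]
    have h1 : (∑ j ∈ Finset.range N, ((j:ℝ)+1)^q) / (N:ℝ)^q
        ≤ ((N:ℝ)^(1+q') / (1+q')) / (N:ℝ)^q := by
      gcongr
      exact aux_sum_rpow hqq' hq'1 hq'0 N
    calc (∑ j ∈ Finset.range N, ((j:ℝ)+1)^q) / (N:ℝ)^q * B^(1-θ)⁻¹
        ≤ (((N:ℝ)^(1+q') / (1+q')) / (N:ℝ)^q) * B^(1-θ)⁻¹ := by
          exact mul_le_mul_of_nonneg_right h1 (Real.rpow_nonneg hBpos.le _)
      _ = (N:ℝ)^(1+q') * (1+q')⁻¹ * ((N:ℝ)^q)⁻¹ * B^(1-θ)⁻¹ := by ring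
  have hT0 : 0 ≤ ∑ k ∈ Finset.range N, (e k ^ a * B)^(1-θ)⁻¹ :=
    Finset.sum_nonneg fun k hk => Real.rpow_nonneg
      (mul_nonneg (Real.rpow_nonneg (hord k hk).1.le a) hBpos.le) _
  have hsW0 : 0 ≤ ∑ k ∈ Finset.range N, Wk k :=
    Finset.sum_nonneg fun k hk => (hord k hk).2
  -- final identity for the constant
  have hN2 : (N:ℝ) = (2:ℝ)^((m:ℝ)+1) := by
    rw [hNR, ← Real.rpow_natCast 2 (m+1)]; push_cast; ring_nf
  have hB2 : B = (2:ℝ)^(-(((m:ℝ)+2)*b)) := by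
    have h12 : ((1:ℝ)/2^(m+2)) = (2:ℝ)^(-((m:ℝ)+2)) := by
      rw [Real.rpow_neg two_pos.le, one_div]
      congr 1
      rw [← Real.rpow_natCast 2 (m+2)]; push_cast; ring_nf
    rw [hB, h12, ← Real.rpow_mul two_pos.le]
    congr 1
    ring
  have hconst : ((N:ℝ)^(1+q') * (1+q')⁻¹ * ((N:ℝ)^q)⁻¹ * B^(1-θ)⁻¹)^(1-θ)
      = ((1+q')^(1-θ))⁻¹ *
        (2:ℝ)^(((m:ℝ)+1)*((1+q')*(1-θ)) - ((m:ℝ)+1)*a - ((m:ℝ)+2)*b) := by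
    rw [Real.mul_rpow (by positivity) (by positivity),
        Real.mul_rpow (by positivity) (by positivity),
        Real.mul_rpow (by positivity) (by positivity)]
    rw [Real.inv_rpow h1q'.le, Real.inv_rpow hNq.le]
    rw [← Real.rpow_mul hNRpos.le, ← Real.rpow_mul hNRpos.le, ← Real.rpow_mul hBpos.le]
    rw [e1, Real.rpow_one, hqa]
    rw [hN2, hB2, ← Real.rpow_mul two_pos.le, ← Real.rpow_mul two_pos.le,
        ← Real.rpow_neg two_pos.le]
    rw [show (((m:ℝ)+1)*((1+q')*(1-θ)) - ((m:ℝ)+1)*a - ((m:ℝ)+2)*b)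
        = ((m:ℝ)+1)*((1+q')*(1-θ)) + (-(((m:ℝ)+1)*a)) + (-(((m:ℝ)+2)*b)) by ring,
      Real.rpow_add two_pos, Real.rpow_add two_pos]
    ring
  have hWst : 0 ≤ W s t := hW0 s t le_rfl hst.le le_rfl
  calc ∑ k ∈ Finset.range N, e k ^ a * B * Wk k ^ θ
      ≤ (∑ k ∈ Finset.range N, (e k ^ a * B)^(1-θ)⁻¹)^(1-θ)
          * (∑ k ∈ Finset.range N, Wk k)^θ := holder
    _ ≤ ((N:ℝ)^(1+q') * (1+q')⁻¹ * ((N:ℝ)^q)⁻¹ * B^(1-θ)⁻¹)^(1-θ) * (W s t)^θ := by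
        apply mul_le_mul
        · exact Real.rpow_le_rpow hT0 hTle h1θ.le
        · exact Real.rpow_le_rpow hsW0 hpart hθ0.le
        · exact Real.rpow_nonneg hsW0 θ
        · exact Real.rpow_nonneg (by positivity) (1-θ)
    _ = ((1+q')^(1-θ))⁻¹ *
          (2:ℝ)^(((m:ℝ)+1)*((1+q')*(1-θ)) - ((m:ℝ)+1)*a - ((m:ℝ)+2)*b) * W s t ^ θ := by
        rw [hconst]



/-- the first key dyadic estimate.  For `1/3 < γ ≤ 1/2`, `η ≥ 0`, `ε > 0`
with `η + ε < γ` and `i ∈ {0,1,2}`, there is a finite constant `M̃` (depending only on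
`γ, η, ε, i`) such that for every `s < t` and every nonnegative superadditive function
`W` on the subintervals of `[s,t]`, with dyadic points `τⁿₘ = s + (n/2^m)(t-s)`,
`∑_{m ≥ 1} ∑_{0 ≤ n < 2^m} (1 - 2n/2^{m+1})^{γ(i-2)-η} (1/2^{m+1})^{2γ+η+ε}
  W(τ^{2n+1}_{m+1}, τ^{2n+2}_{m+1})^{γ-η-ε} ≤ M̃ W(s,t)^{γ-η-ε}`.
(The outer sum over `m ≥ 1` is written below as a sum over `m : ℕ` with index `m+1`.) -/
theorem dyadic_estimate_one (γ η ε : ℝ) (i : ℕ)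
    (hγl : 1 / 3 < γ) (hγu : γ ≤ 1 / 2) (hη : 0 ≤ η) (hε : 0 < ε)
    (hηε : η + ε < γ) (hi : i ≤ 2) :
    ∃ M : ℝ, 0 ≤ M ∧ ∀ (s t : ℝ), s < t →
      ∀ W : ℝ → ℝ → ℝ,
        (∀ u v, s ≤ u → u ≤ v → v ≤ t → 0 ≤ W u v) →
        (∀ u v r, s ≤ u → u ≤ v → v ≤ r → r ≤ t → W u v + W v r ≤ W u r) →
        (∑' m : ℕ, ∑ k ∈ Finset.range (2 ^ (m + 1)),
            ENNReal.ofReal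
              ((1 - 2 * (k : ℝ) / 2 ^ (m + 2)) ^ (γ * ((i : ℝ) - 2) - η) *
                ((1 : ℝ) / 2 ^ (m + 2)) ^ (2 * γ + η + ε) *
                W (s + (2 * (k : ℝ) + 1) / 2 ^ (m + 2) * (t - s))
                    (s + (2 * (k : ℝ) + 2) / 2 ^ (m + 2) * (t - s)) ^ (γ - η - ε)))
          ≤ ENNReal.ofReal (M * W s t ^ (γ - η - ε)) := by
  have two_pos : (0:ℝ) < 2 := by norm_num
  have hγ0 : 0 < γ := by linarith
  set θ := γ - η - ε with hθdef
  set a := γ * ((i : ℝ) - 2) - η with hadef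
  set b := 2 * γ + η + ε with hbdef
  have hθ0 : 0 < θ := by rw [hθdef]; linarith
  have hθhalf : θ ≤ 1/2 := by rw [hθdef]; linarith
  have h1θ : 0 < 1 - θ := by rw [hθdef]; linarith
  have h1θhalf : 1/2 ≤ 1 - θ := by rw [hθdef]; linarith
  have hiR : (i:ℝ) ≤ 2 := by
    have : (i:ℝ) ≤ ((2:ℕ):ℝ) := Nat.cast_le.mpr hi
    simpa using this
  have ha : a ≤ 0 := by rw [hadef]; nlinarith
  have hb : 0 < b := by rw [hbdef]; linarith
  have hba : b + a = γ * (i:ℝ) + ε := by rw [hadef, hbdef]; ring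
  set q := a * (1-θ)⁻¹ with hqdef
  have hq0 : q ≤ 0 := mul_nonpos_of_nonpos_of_nonneg ha (by positivity)
  have h2θpos : (0:ℝ) < 2*(1-θ) := by linarith
  set q' := max q (-1 + ε/(2*(1-θ))) with hq'def
  have hεsmall : ε/(2*(1-θ)) ≤ 1 := by rw [div_le_one h2θpos]; linarith
  have hq'0 : q' ≤ 0 := max_le hq0 (by linarith)
  have hq'1 : -1 < q' := by
    have h1 : (-1:ℝ) < -1 + ε/(2*(1-θ)) := by
      have := div_pos hε h2θpos; linarith
    exact lt_of_lt_of_le h1 (le_max_right _ _)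
  have hqq' : q ≤ q' := le_max_left _ _
  have h1q' : 0 < 1 + q' := by linarith
  set ρ := b + a - (1+q')*(1-θ) with hρdef
  have hρ : 0 < ρ := by
    rcases max_cases q (-1 + ε/(2*(1-θ))) with ⟨hm, hge⟩ | ⟨hm, hlt⟩
    · have hqa : q*(1-θ) = a := by
        rw [hqdef, mul_assoc, inv_mul_cancel₀ h1θ.ne', mul_one]
      have hexp : (1+q)*(1-θ) = (1-θ) + a := by rw [add_mul, one_mul, hqa]
      rw [hρdef, hq'def, hm, hexp, hbdef, hθdef]
      linarith
    · have hexp : (1 + (-1 + ε/(2*(1-θ))))*(1-θ) = ε/2 := by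
        field_simp
        ring
      rw [hρdef, hq'def, hm, hexp]
      have : 0 ≤ γ * (i:ℝ) := mul_nonneg hγ0.le (Nat.cast_nonneg i)
      linarith [hba]
  set r := (2:ℝ)^(-ρ) with hrdef
  have hr0 : 0 < r := Real.rpow_pos_of_pos two_pos _
  have hr1 : r < 1 := Real.rpow_lt_one_of_one_lt_of_neg one_lt_two (by linarith)
  set C₂ := ((1+q')^(1-θ))⁻¹ * (2:ℝ)^(-2*b - a + (1+q')*(1-θ)) with hC₂def
  have hC₂ : 0 ≤ C₂ :=
    mul_nonneg (inv_nonneg.mpr (Real.rpow_nonneg h1q'.le _)) (Real.rpow_nonneg two_pos.le _)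
  refine ⟨C₂ * (1-r)⁻¹, mul_nonneg hC₂ (inv_nonneg.mpr (by linarith)), ?_⟩
  intro s t hst W hW0 hWs
  have hWst : 0 ≤ W s t := hW0 s t le_rfl hst.le le_rfl
  have hconst2 : ∀ m : ℕ, ((1+q')^(1-θ))⁻¹ *
      (2:ℝ)^(((m:ℝ)+1)*((1+q')*(1-θ)) - ((m:ℝ)+1)*a - ((m:ℝ)+2)*b) = C₂ * r^m := by
    intro m
    rw [hC₂def, hrdef, ← Real.rpow_natCast ((2:ℝ)^(-ρ)) m,
      ← Real.rpow_mul (by norm_num : (0:ℝ) ≤ 2), mul_assoc, ← Real.rpow_add two_pos]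
    congr 2
    rw [hρdef]; ring
  have hterm0 : ∀ m : ℕ, ∀ k ∈ Finset.range (2^(m+1)),
      0 ≤ (1 - 2*(k:ℝ)/2^(m+2)) ^ a * ((1:ℝ)/2^(m+2)) ^ b *
        W (s + (2*(k:ℝ)+1)/2^(m+2)*(t-s)) (s + (2*(k:ℝ)+2)/2^(m+2)*(t-s)) ^ θ := by
    intro m k hk
    obtain ⟨h1, h2, h3, h4⟩ := aux_ord hst m k (Finset.mem_range.mp hk)
    exact mul_nonneg (mul_nonneg (Real.rpow_nonneg h1.le _)
      (Real.rpow_nonneg (by positivity) _)) (Real.rpow_nonneg (hW0 _ _ h2 h3 h4) _)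
  have key : ∀ m : ℕ, ∑ k ∈ Finset.range (2^(m+1)),
      (1 - 2*(k:ℝ)/2^(m+2)) ^ a * ((1:ℝ)/2^(m+2)) ^ b *
        W (s + (2*(k:ℝ)+1)/2^(m+2)*(t-s)) (s + (2*(k:ℝ)+2)/2^(m+2)*(t-s)) ^ θ
      ≤ C₂ * r^m * W s t ^ θ := by
    intro m
    calc ∑ k ∈ Finset.range (2^(m+1)),
        (1 - 2*(k:ℝ)/2^(m+2)) ^ a * ((1:ℝ)/2^(m+2)) ^ b *
          W (s + (2*(k:ℝ)+1)/2^(m+2)*(t-s)) (s + (2*(k:ℝ)+2)/2^(m+2)*(t-s)) ^ θ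
        ≤ ((1+q')^(1-θ))⁻¹ *
            (2:ℝ)^(((m:ℝ)+1)*((1+q')*(1-θ)) - ((m:ℝ)+1)*a - ((m:ℝ)+2)*b) * W s t ^ θ :=
          aux_perm θ a b q q' hθ0 h1θ hqdef ha hq'1 hq'0 hqq' hb s t hst W hW0 hWs m
      _ = C₂ * r^m * W s t ^ θ := by rw [hconst2 m]
  calc (∑' m : ℕ, ∑ k ∈ Finset.range (2 ^ (m + 1)),
        ENNReal.ofReal
          ((1 - 2 * (k : ℝ) / 2 ^ (m + 2)) ^ a * ((1 : ℝ) / 2 ^ (m + 2)) ^ b *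
            W (s + (2 * (k : ℝ) + 1) / 2 ^ (m + 2) * (t - s))
                (s + (2 * (k : ℝ) + 2) / 2 ^ (m + 2) * (t - s)) ^ θ))
      = ∑' m : ℕ, ENNReal.ofReal (∑ k ∈ Finset.range (2 ^ (m + 1)),
          (1 - 2 * (k : ℝ) / 2 ^ (m + 2)) ^ a * ((1 : ℝ) / 2 ^ (m + 2)) ^ b *
            W (s + (2 * (k : ℝ) + 1) / 2 ^ (m + 2) * (t - s))
                (s + (2 * (k : ℝ) + 2) / 2 ^ (m + 2) * (t - s)) ^ θ) :=
        tsum_congr fun m => (ENNReal.ofReal_sum_of_nonneg (hterm0 m)).symm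
    _ ≤ ENNReal.ofReal (C₂ * (1-r)⁻¹ * W s t ^ θ) := by
        rw [ENNReal.tsum_eq_iSup_sum]
        refine iSup_le fun F => ?_
        rw [← ENNReal.ofReal_sum_of_nonneg (fun m _ => Finset.sum_nonneg (hterm0 m))]
        refine ENNReal.ofReal_le_ofReal ?_
        have hgeo : ∑ m ∈ F, r^m ≤ (1-r)⁻¹ := by
          rw [← tsum_geometric_of_lt_one hr0.le hr1]
          exact Summable.sum_le_tsum F (fun i _ => pow_nonneg hr0.le i)
            (summable_geometric_of_lt_one hr0.le hr1)
        calc ∑ m ∈ F, (∑ k ∈ Finset.range (2 ^ (m + 1)),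
              (1 - 2 * (k : ℝ) / 2 ^ (m + 2)) ^ a * ((1 : ℝ) / 2 ^ (m + 2)) ^ b *
                W (s + (2 * (k : ℝ) + 1) / 2 ^ (m + 2) * (t - s))
                    (s + (2 * (k : ℝ) + 2) / 2 ^ (m + 2) * (t - s)) ^ θ)
            ≤ ∑ m ∈ F, C₂ * r^m * W s t ^ θ := Finset.sum_le_sum fun m _ => key m
          _ = C₂ * W s t ^ θ * ∑ m ∈ F, r^m := by
              rw [Finset.mul_sum]
              exact Finset.sum_congr rfl fun m _ => by ring
          _ ≤ C₂ * W s t ^ θ * (1-r)⁻¹ :=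
              mul_le_mul_of_nonneg_left hgeo (mul_nonneg hC₂ (Real.rpow_nonneg hWst θ))
          _ = C₂ * (1-r)⁻¹ * W s t ^ θ := by ring
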